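/- Kučera: Every Martin-Löf random sequence has diagonally noncomputable degree: for every Martin-Löf random A ∈ 2^ω there is a total function f : ℕ → ℕ recursive in A such that f(e) ≠ φ_e(e) for every e with φ_e(e)↓. -/

import Mathlib

open scoped ENNReal NNReal Classical

namespace AR

/-- Elements of Cantor space `2^ω`: infinite binary sequences. -/
abbrev Seq := ℕ → Bool

/-- Finite binary strings `2^{<ω}`. -/
abbrev Str := List Bool

/-- The first `n` bits of a sequence `A`, as a finite string (`A↾n`). -/
def pre (A : Seq) (n : ℕ) : Str := List.ofFn fun i : Fin n => A i

/-- The basic clopen cylinder `[σ]` of all sequences extending `σ`. -/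
def cyl (σ : Str) : Set Seq := {A | pre A σ.length = σ}

/-- A measure on Cantor space is *fair-coin* if every cylinder `[σ]` has measure
`2^{-|σ|}`; this uniquely characterizes the usual product measure `μ` on `2^ω`. -/
def FairCoin (μ : MeasureTheory.Measure Seq) : Prop :=
  ∀ σ : Str, μ (cyl σ) = (2 : ℝ≥0∞)⁻¹ ^ σ.length

/-- A machine is a partial computable function `2^{<ω} ⇀ 2^{<ω}`. -/
def IsMachine (M : Str →. Str) : Prop := Partrec M

/-- Kolmogorov complexity of `τ` relative to the machine `M`:
`C_M(τ) = min{|σ| : M(σ)↓ = τ}`, with value `∞` if no such `σ` exists. -/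
noncomputable def Cplx (M : Str →. Str) (τ : Str) : ℕ∞ :=
  sInf ((fun σ : Str => (σ.length : ℕ∞)) '' {σ | τ ∈ M σ})

/-- A universal machine: a machine simulating every machine up to an additive
constant.  `Cplx U` for universal `U` is plain Kolmogorov complexity `C`. -/
def UniversalMachine (U : Str →. Str) : Prop :=
  IsMachine U ∧ ∀ M : Str →. Str, IsMachine M → ∃ c : ℕ, ∀ τ, Cplx U τ ≤ Cplx M τ + c

/-- A set of strings is prefix-free if none of its elements is a proper initial
segment of another. -/
def PrefixFree (S : Set Str) : Prop :=
  ∀ σ ∈ S, ∀ τ ∈ S, σ <+: τ → σ = τ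

/-- A prefix-free machine: a machine whose domain is prefix-free. -/
def PrefixFreeMachine (M : Str →. Str) : Prop :=
  IsMachine M ∧ PrefixFree {σ | (M σ).Dom}

/-- A universal prefix-free machine.  `Cplx U` for such `U` is prefix-free
Kolmogorov complexity `K`. -/
def UniversalPFMachine (U : Str →. Str) : Prop :=
  PrefixFreeMachine U ∧
    ∀ M : Str →. Str, PrefixFreeMachine M → ∃ c : ℕ, ∀ τ, Cplx U τ ≤ Cplx M τ + c

/-- A c.e. (recursively enumerable) predicate. -/
def CEPred {α} [Primcodable α] (p : α → Prop) : Prop :=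
  Partrec fun a => Part.assert (p a) fun _ => Part.some ()

/-- A Martin-Löf test: a sequence of uniformly Σ⁰₁ classes `U i`, given by a single
c.e. set `W` of pairs, with `μ (U i) ≤ 2^{-i}`. -/
def MLTest (μ : MeasureTheory.Measure Seq) (U : ℕ → Set Seq) : Prop :=
  ∃ W : Set (ℕ × Str), CEPred (· ∈ W) ∧
    (∀ i, U i = ⋃ σ ∈ {σ : Str | (i, σ) ∈ W}, cyl σ) ∧
    ∀ i, μ (U i) ≤ (2 : ℝ≥0∞)⁻¹ ^ i

/-- `A` is Martin-Löf random if it passes every Martin-Löf test. -/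
def MLRandom (μ : MeasureTheory.Measure Seq) (A : Seq) : Prop :=
  ∀ U : ℕ → Set Seq, MLTest μ U → A ∉ ⋂ i, U i

/-- Oracle partial recursion: `RecIn O f` means that the partial function
`f : ℕ ⇀ ℕ` is partial recursive relative to the oracle `O`
(Mathlib's `Nat.RecursiveIn`). -/
inductive RecIn (O : ℕ →. ℕ) : (ℕ →. ℕ) → Prop
  | zero : RecIn O (pure 0)
  | succ : RecIn O Nat.succ
  | left : RecIn O ↑fun n : ℕ => n.unpair.1
  | right : RecIn O ↑fun n : ℕ => n.unpair.2
  | oracle : RecIn O O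
  | pair {f g} : RecIn O f → RecIn O g → RecIn O fun n => Nat.pair <$> f n <*> g n
  | comp {f g} : RecIn O f → RecIn O g → RecIn O fun n => g n >>= f
  | prec {f g} : RecIn O f → RecIn O g → RecIn O (Nat.unpaired fun a n =>
      n.rec (f a) fun y IH => do let i ← IH; g (Nat.pair a (Nat.pair y i)))
  | rfind {f} : RecIn O f →
      RecIn O fun a => Nat.rfind fun n => (fun m => m = 0) <$> f (Nat.pair a n)

/-- The characteristic-function oracle associated to a sequence `A ∈ 2^ω`. -/
def oracleOf (A : Seq) : ℕ →. ℕ := fun n => Part.some (cond (A n) 1 0)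

/-- The characteristic-function oracle associated to a set of naturals. -/
noncomputable def oracleOfSet (S : Set ℕ) : ℕ →. ℕ :=
  fun n => Part.some (if n ∈ S then 1 else 0)

/-- Relative partial computability for partial functions between coded types. -/
def PartrecIn (O : ℕ →. ℕ) {α σ} [Primcodable α] [Primcodable σ] (f : α →. σ) : Prop :=
  RecIn O fun n =>
    Part.bind (Encodable.decode (α := α) n) fun a => (f a).map Encodable.encode

/-- A predicate is c.e. relative to the oracle `O`. -/
def CEPredIn (O : ℕ →. ℕ) {α} [Primcodable α] (p : α → Prop) : Prop :=
  PartrecIn O fun a => Part.assert (p a) fun _ => Part.some ()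

/-- Turing reducibility between oracles: `f` is recursive in `g`. -/
def TuringLE (f g : ℕ →. ℕ) : Prop := RecIn g f

/-- Turing reducibility `B ≤_T A` between sequences. -/
def SeqTuringLE (B A : Seq) : Prop := TuringLE (oracleOf B) (oracleOf A)

/-- The `e`-th partial computable function `φ_e`, via Mathlib's standard
enumeration of codes for the partial recursive functions. -/
def phi (e : ℕ) : ℕ →. ℕ := (Denumerable.ofNat Nat.Partrec.Code e).eval

/-- The halting problem `∅' = {e : φ_e(e)↓}`. -/
def haltingSet : Set ℕ := {e | (phi e e).Dom}

/-- A Martin-Löf test relative to the oracle `O`. -/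
def MLTestIn (O : ℕ →. ℕ) (μ : MeasureTheory.Measure Seq) (U : ℕ → Set Seq) : Prop :=
  ∃ W : Set (ℕ × Str), CEPredIn O (· ∈ W) ∧
    (∀ i, U i = ⋃ σ ∈ {σ : Str | (i, σ) ∈ W}, cyl σ) ∧
    ∀ i, μ (U i) ≤ (2 : ℝ≥0∞)⁻¹ ^ i

/-- Martin-Löf randomness relative to the oracle `O`. -/
def MLRandomIn (O : ℕ →. ℕ) (μ : MeasureTheory.Measure Seq) (A : Seq) : Prop :=
  ∀ U : ℕ → Set Seq, MLTestIn O μ U → A ∉ ⋂ i, U i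


/-! ### Auxiliary machinery for Kučera's theorem -/

set_option linter.dupNamespace false

/-- The "marked binary code" of a string: the natural number with binary digits
`1 σ₀ σ₁ ⋯`.  Injective on strings of a fixed length. -/
def mc (σ : Str) : ℕ := σ.foldl (fun n b => 2 * n + cond b 1 0) 1

/-- The c.e. set of pairs defining the Kučera test. -/
def Wdnc : Set (ℕ × Str) :=
  {p | p.1 + 1 ≤ p.2.length ∧ mc p.2 ∈ phi p.2.length p.2.length}

lemma mc_append (σ : Str) (b : Bool) : mc (σ ++ [b]) = 2 * mc σ + cond b 1 0 := by
  simp [mc, List.foldl_append]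

lemma pre_succ (A : Seq) (n : ℕ) : pre A (n + 1) = pre A n ++ [A n] := by
  rw [pre, List.ofFn_succ', List.concat_eq_append]
  simp [pre, Fin.last]

lemma length_pre (A : Seq) (n : ℕ) : (pre A n).length = n := by simp [pre]

lemma mc_inj : ∀ σ τ : Str, σ.length = τ.length → mc σ = mc τ → σ = τ := by
  intro σ
  induction σ using List.reverseRecOn with
  | nil => intro τ h _; cases τ <;> simp_all
  | append_singleton σ' a ih =>
    intro τ h hm
    induction τ using List.reverseRecOn with
    | nil => simp at h
    | append_singleton τ' b _ =>
      simp only [List.length_append, List.length_singleton] at h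
      rw [mc_append, mc_append] at hm
      have hab : a = b ∧ mc σ' = mc τ' := by cases a <;> cases b <;> simp at hm ⊢ <;> omega
      rw [ih τ' (by omega) hab.2, hab.1]

lemma mc_primrec : Primrec mc :=
  Primrec.list_foldl Primrec.id (Primrec.const 1)
    ((Primrec.nat_add.comp
      (Primrec.nat_mul.comp (Primrec.const 2) (Primrec.fst.comp Primrec.snd))
      (Primrec.cond (Primrec.snd.comp Primrec.snd) (Primrec.const 1) (Primrec.const 0))).to₂.comp
        Primrec.fst Primrec.snd).to₂

lemma ce_Wdnc : CEPred (· ∈ Wdnc) := by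
  have hlen : Computable fun p : ℕ × Str => p.2.length :=
    (Primrec.list_length.comp Primrec.snd).to_comp
  have h1 : Partrec fun p : ℕ × Str => phi p.2.length p.2.length :=
    Nat.Partrec.Code.eval_part.comp ((Computable.ofNat _).comp hlen) hlen
  have hle : PrimrecPred fun q : (ℕ × Str) × ℕ => q.1.1 + 1 ≤ q.1.2.length :=
    Primrec.nat_le.comp (Primrec.nat_add.comp (Primrec.fst.comp Primrec.fst) (Primrec.const 1))
      (Primrec.list_length.comp (Primrec.snd.comp Primrec.fst))
  have heq : PrimrecPred fun q : (ℕ × Str) × ℕ => q.2 = mc q.1.2 :=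
    Primrec.eq.comp Primrec.snd (mc_primrec.comp (Primrec.snd.comp Primrec.fst))
  have hdec : Computable fun q : (ℕ × Str) × ℕ =>
      (if q.1.1 + 1 ≤ q.1.2.length ∧ q.2 = mc q.1.2 then some () else none : Option Unit) :=
    (Primrec.ite (hle.and heq) (Primrec.const (some ())) (Primrec.const none)).to_comp
  have h2 : Partrec fun p : ℕ × Str => (phi p.2.length p.2.length).bind fun v =>
      ((if p.1 + 1 ≤ p.2.length ∧ v = mc p.2 then some () else none : Option Unit) : Part Unit) :=
    h1.bind (Computable.ofOption hdec).to₂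
  refine h2.of_eq fun p => ?_
  apply Part.ext
  intro u
  simp only [Part.mem_bind_iff, Part.mem_assert_iff, Part.mem_coe, Part.mem_some_iff]
  constructor
  · rintro ⟨v, hv, hu⟩
    split at hu
    · rename_i hc
      exact ⟨⟨hc.1, hc.2 ▸ hv⟩, trivial⟩
    · simp at hu
  · rintro ⟨⟨h1, h2⟩, _⟩
    refine ⟨mc p.2, h2, ?_⟩
    simp [h1]

lemma measure_Udnc {μ : MeasureTheory.Measure Seq} (hμ : FairCoin μ) (i : ℕ) :
    μ (⋃ σ ∈ {σ : Str | (i, σ) ∈ Wdnc}, cyl σ) ≤ (2 : ℝ≥0∞)⁻¹ ^ i := by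
  set S : ℕ → Set Str := fun k => {σ | (i, σ) ∈ Wdnc ∧ σ.length = k + i + 1} with hS
  have hsub : (⋃ σ ∈ {σ : Str | (i, σ) ∈ Wdnc}, cyl σ) ⊆ ⋃ k : ℕ, ⋃ σ ∈ S k, cyl σ := by
    intro x hx
    simp only [Set.mem_iUnion, Set.mem_setOf_eq, hS] at hx ⊢
    obtain ⟨σ, hσ, hxσ⟩ := hx
    exact ⟨σ.length - (i + 1), σ, ⟨hσ, by have h5 : i + 1 ≤ σ.length := hσ.1; omega⟩, hxσ⟩
  refine le_trans (MeasureTheory.measure_mono hsub)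
    (le_trans (MeasureTheory.measure_iUnion_le _) ?_)
  have hk : ∀ k, μ (⋃ σ ∈ S k, cyl σ) ≤ (2:ℝ≥0∞)⁻¹ ^ (k + i + 1) := by
    intro k
    rcases Set.eq_empty_or_nonempty (S k) with h | ⟨σ0, hσ0⟩
    · simp [h]
    · have hsub2 : (⋃ σ ∈ S k, cyl σ) ⊆ cyl σ0 := by
        intro x hx
        simp only [Set.mem_iUnion] at hx
        obtain ⟨σ, hσ, hxσ⟩ := hx
        have hss : σ = σ0 := by
          have h1 := hσ.1.2
          have h2 := hσ0.1.2
          have hl : σ.length = σ0.length := by rw [hσ.2, hσ0.2]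
          exact mc_inj σ σ0 hl (Part.mem_unique (hl ▸ h1) h2)
        exact hss ▸ hxσ
      calc μ (⋃ σ ∈ S k, cyl σ) ≤ μ (cyl σ0) := MeasureTheory.measure_mono hsub2
        _ = (2:ℝ≥0∞)⁻¹ ^ σ0.length := hμ σ0
        _ = (2:ℝ≥0∞)⁻¹ ^ (k + i + 1) := by rw [hσ0.2]
  refine le_trans (ENNReal.tsum_le_tsum hk) ?_
  have hre : ∀ k : ℕ, (2:ℝ≥0∞)⁻¹ ^ (k + i + 1) = (2:ℝ≥0∞)⁻¹ ^ (i+1) * (2:ℝ≥0∞)⁻¹ ^ k := by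
    intro k; rw [← pow_add]; ring_nf
  rw [tsum_congr hre, ENNReal.tsum_mul_left, ENNReal.tsum_geometric,
    ENNReal.one_sub_inv_two, pow_succ, mul_assoc,
    ENNReal.mul_inv_cancel (by simp) (by simp), mul_one]

lemma some_bind_coe (a : ℕ) (f : ℕ → ℕ) :
    (Part.some a >>= (f : ℕ →. ℕ)) = Part.some (f a) := by
  change Part.bind (Part.some a) (fun x => Part.some (f x)) = _
  exact Part.bind_some a _

lemma some_bind_pf (a : ℕ) (f : ℕ →. ℕ) : (Part.some a >>= f) = f a := by
  change Part.bind (Part.some a) (f : ℕ → Part ℕ) = _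
  exact Part.bind_some a _

lemma recIn_of_eq {O f g} (h : RecIn O f) (e : ∀ n, f n = g n) : RecIn O g :=
  (funext e : f = g) ▸ h

lemma recIn_of_partrec {O : ℕ →. ℕ} {f : ℕ →. ℕ} (h : Nat.Partrec f) : RecIn O f := by
  induction h with
  | zero => exact .zero
  | succ => exact .succ
  | left => exact .left
  | right => exact .right
  | pair _ _ hf hg => exact .pair hf hg
  | comp _ _ hf hg => exact .comp hf hg
  | prec _ _ hf hg => exact .prec hf hg
  | rfind _ hf => exact .rfind hf

lemma recIn_of_primrec {O : ℕ →. ℕ} {f : ℕ → ℕ} (h : Primrec f) : RecIn O ↑f :=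
  recIn_of_partrec (Nat.Partrec.of_primrec (Primrec.nat_iff.mp h))

lemma recIn_mc_pre (A : Seq) : RecIn (oracleOf A) ↑(fun n => mc (pre A n)) := by
  set O := oracleOf A with hO
  have hp1 : RecIn O ↑(fun m : ℕ => m.unpair.2.unpair.1) :=
    recIn_of_primrec ((Primrec.fst.comp Primrec.unpair).comp (Primrec.snd.comp Primrec.unpair))
  have hp2 : RecIn O ↑(fun m : ℕ => m.unpair.2.unpair.2) :=
    recIn_of_primrec ((Primrec.snd.comp Primrec.unpair).comp (Primrec.snd.comp Primrec.unpair))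
  have hu1 : RecIn O fun m : ℕ => O (m.unpair.2.unpair.1) :=
    recIn_of_eq (RecIn.comp .oracle hp1) (by intro n; simp [PFun.coe_val]; exact some_bind_pf _ _)
  have hq : RecIn O fun m : ℕ => Nat.pair <$> O (m.unpair.2.unpair.1) <*>
      (↑(fun m : ℕ => m.unpair.2.unpair.2) : ℕ →. ℕ) m :=
    RecIn.pair hu1 hp2
  have hh : RecIn O ↑(fun p : ℕ => 2 * p.unpair.2 + p.unpair.1) :=
    recIn_of_primrec (Primrec.nat_add.comp
      (Primrec.nat_mul.comp (Primrec.const 2) (Primrec.snd.comp Primrec.unpair))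
      (Primrec.fst.comp Primrec.unpair))
  have hg : RecIn O fun m : ℕ => ((fun m : ℕ => Nat.pair <$> O (m.unpair.2.unpair.1) <*>
      (↑(fun m : ℕ => m.unpair.2.unpair.2) : ℕ →. ℕ) m) m) >>=
      (↑(fun p : ℕ => 2 * p.unpair.2 + p.unpair.1) : ℕ →. ℕ) :=
    RecIn.comp hh hq
  have hbase : RecIn O fun _ : ℕ => (Part.some 1 : Part ℕ) :=
    recIn_of_eq (RecIn.comp (O := O) .succ .zero) (by
      intro n
      rw [show (pure 0 : ℕ →. ℕ) n = Part.some 0 from rfl]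
      exact some_bind_coe 0 Nat.succ)
  have hprec := RecIn.prec hbase hg
  have hfin := RecIn.comp hprec (recIn_of_primrec (f := fun n : ℕ => Nat.pair 0 n)
    (Primrec₂.comp Primrec₂.natPair (Primrec.const 0) Primrec.id))
  refine recIn_of_eq hfin ?_
  intro n
  simp only [PFun.coe_val, Part.bind_eq_bind, Part.bind_some, Nat.unpaired, Nat.unpair_pair]
  induction n with
  | zero => simp [pre, mc]
  | succ n ih =>
    rw [show (Nat.rec (Part.some 1)
      (fun y IH => IH.bind fun i => (Nat.pair <$> O y <*> Part.some i) >>=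
        (↑(fun p : ℕ => 2 * (Nat.unpair p).2 + (Nat.unpair p).1) : ℕ →. ℕ)) (n+1) : Part ℕ)
      = (Nat.rec (Part.some 1)
      (fun y IH => IH.bind fun i => (Nat.pair <$> O y <*> Part.some i) >>=
        (↑(fun p : ℕ => 2 * (Nat.unpair p).2 + (Nat.unpair p).1) : ℕ →. ℕ)) n : Part ℕ).bind
        (fun i => (Nat.pair <$> O n <*> Part.some i) >>=
        (↑(fun p : ℕ => 2 * (Nat.unpair p).2 + (Nat.unpair p).1) : ℕ →. ℕ)) from rfl, ih]
    simp [hO, oracleOf, Seq.seq, PFun.coe_val, pre_succ, mc_append, some_bind_coe]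

lemma recIn_patch {O : ℕ →. ℕ} {c : ℕ → ℕ} (hc : RecIn O ↑c) (N : ℕ) (t : ℕ → ℕ) :
    RecIn O ↑(fun e => if e < N then t e else c e) := by
  set L : List ℕ := (List.range N).map t with hLdef
  have hL : ∀ e, e < N → L.getD e 0 = t e := by
    intro e he
    rw [hLdef, List.getD_eq_getElem _ _ (by simpa using he)]
    simp
  set patch : ℕ → ℕ := fun m => if m.unpair.1 < N then L.getD m.unpair.1 0 else m.unpair.2
    with hpdef
  have hpatch : Primrec patch :=
    Primrec.ite (Primrec.nat_lt.comp (Primrec.fst.comp Primrec.unpair) (Primrec.const N))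
      ((Primrec.list_getD 0).comp (Primrec.const L) (Primrec.fst.comp Primrec.unpair))
      (Primrec.snd.comp Primrec.unpair)
  have hid : RecIn O ↑(fun n : ℕ => n) := recIn_of_primrec Primrec.id
  refine recIn_of_eq (RecIn.comp (recIn_of_primrec hpatch) (RecIn.pair hid hc)) ?_
  intro n
  simp only [PFun.coe_val, Seq.seq, Part.map_eq_map, Part.map_some, Part.bind_eq_bind,
    Part.bind_some, hpdef, Nat.unpair_pair, some_bind_coe]
  split
  · rename_i h
    rw [hL n h]
  · rfl

/-- **Kučera**: every Martin-Löf random sequence has DNC degree: it computes a total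
function `f` with `f(e) ≠ φ_e(e)` whenever `φ_e(e)↓`. -/
theorem MLRandom_DNC (μ : MeasureTheory.Measure Seq) (hμ : FairCoin μ)
    (A : Seq) (hA : MLRandom μ A) :
    ∃ f : ℕ → ℕ, RecIn (oracleOf A) ↑f ∧
      ∀ e : ℕ, (phi e e).Dom → ¬ f e ∈ phi e e := by
  classical
  have htest : MLTest μ (fun i => ⋃ σ ∈ {σ : Str | (i, σ) ∈ Wdnc}, cyl σ) :=
    ⟨Wdnc, ce_Wdnc, fun i => rfl, fun i => measure_Udnc hμ i⟩
  have hni := hA _ htest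
  rw [Set.mem_iInter] at hni
  push_neg at hni
  obtain ⟨i, hi⟩ := hni
  set t : ℕ → ℕ := fun e => if h : (phi e e).Dom then (phi e e).get h + 1 else 0 with ht
  refine ⟨fun e => if e < i + 1 then t e else mc (pre A e),
    recIn_patch (recIn_mc_pre A) (i + 1) t, ?_⟩
  intro e he hmem
  replace hmem : (if e < i + 1 then t e else mc (pre A e)) ∈ phi e e := hmem
  by_cases hlt : e < i + 1
  · rw [if_pos hlt, ht] at hmem
    simp only [he, dif_pos] at hmem
    have := Part.mem_unique hmem (Part.get_mem he)
    omega
  · rw [if_neg hlt] at hmem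
    apply hi
    simp only [Set.mem_iUnion, Set.mem_setOf_eq]
    refine ⟨pre A e, ⟨?_, ?_⟩, ?_⟩
    · show i + 1 ≤ (pre A e).length
      rw [length_pre]; omega
    · show mc (pre A e) ∈ phi (pre A e).length (pre A e).length
      rw [length_pre]; exact hmem
    · show pre A ((pre A e).length) = pre A e
      rw [length_pre]

end AR
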